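/- Let (X,d) be a compact metric space and suppose b > 0 is not in the closure of the set of local minimum values of d. Then there exists ε > 0 such that for all b − ε < t ≤ s < b + ε, the inclusion Rips(X,t) ↪ Rips(X,s) induces a surjection on first simplicial homology H₁ (with any fixed coefficient group). In other words, the emergent H₁ spectrum of the open Rips filtration of X is contained in the closure of LocMin(d). -/

import Mathlib

/-- The simplicial boundary of a `1`-chain with coefficients in `G`. -/
noncomputable def bd1 {V : Type*} (G : Type*) [AddCommGroup G] (c : (V × V) →₀ G) :
    V →₀ G :=
  c.sum fun p g => Finsupp.single p.2 g - Finsupp.single p.1 g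

/-- The simplicial boundary of a `2`-chain with coefficients in `G`. -/
noncomputable def bd2 {V : Type*} (G : Type*) [AddCommGroup G] (w : (V × V × V) →₀ G) :
    (V × V) →₀ G :=
  w.sum fun t g =>
    Finsupp.single (t.2.1, t.2.2) g - Finsupp.single (t.1, t.2.2) g +
      Finsupp.single (t.1, t.2.1) g

/-- A `1`-cycle in the open Rips complex of `X` at scale `r`: a `1`-chain supported on
pairs at distance `< r` with vanishing boundary. -/
def IsRipsCycle {X : Type*} [MetricSpace X] {G : Type*} [AddCommGroup G] (r : ℝ)
    (c : (X × X) →₀ G) : Prop :=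
  (∀ p ∈ c.support, dist p.1 p.2 < r) ∧ bd1 G c = 0

/-- Two `1`-chains are homologous in the open Rips complex at scale `r` if their
difference is the boundary of a `2`-chain supported on triples of diameter `< r`. -/
def RipsHomologous {X : Type*} [MetricSpace X] (G : Type*) [AddCommGroup G] (r : ℝ)
    (c c' : (X × X) →₀ G) : Prop :=
  ∃ w : (X × X × X) →₀ G,
    (∀ t ∈ w.support,
      dist t.1 t.2.1 < r ∧ dist t.1 t.2.2 < r ∧ dist t.2.1 t.2.2 < r) ∧
    c - c' = bd2 G w

/-- The distance function of `X` attains a local minimum at the pair `(x, y)`. -/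
def LocMinPair {X : Type*} [MetricSpace X] (x y : X) : Prop :=
  ∃ ε > 0, ∀ x' y' : X, dist x x' < ε → dist y y' < ε → dist x y ≤ dist x' y'

/-- `m` is a local minimum value of the distance function of `X`. -/
def IsLocMinVal (X : Type*) [MetricSpace X] (m : ℝ) : Prop :=
  ∃ a b : X, dist a b = m ∧ LocMinPair a b

section Aux
variable {V : Type*} {G : Type*} [AddCommGroup G]

noncomputable def bd1H (V : Type*) (G : Type*) [AddCommGroup G] :
    ((V × V) →₀ G) →+ (V →₀ G) :=
  Finsupp.liftAddHom fun p => Finsupp.singleAddHom p.2 - Finsupp.singleAddHom p.1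

noncomputable def bd2H (V : Type*) (G : Type*) [AddCommGroup G] :
    ((V × V × V) →₀ G) →+ ((V × V) →₀ G) :=
  Finsupp.liftAddHom fun t =>
    Finsupp.singleAddHom (t.2.1, t.2.2) - Finsupp.singleAddHom (t.1, t.2.2) +
      Finsupp.singleAddHom (t.1, t.2.1)

lemma bd1_eq (c : (V × V) →₀ G) : bd1 G c = bd1H V G c := rfl

lemma bd2_eq (w : (V × V × V) →₀ G) : bd2 G w = bd2H V G w := rfl

@[simp] lemma bd1_zero : bd1 (V := V) G 0 = 0 := by rw [bd1_eq]; exact map_zero _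

@[simp] lemma bd2_zero : bd2 (V := V) G 0 = 0 := by rw [bd2_eq]; exact map_zero _

lemma bd1_add (c c' : (V × V) →₀ G) : bd1 G (c + c') = bd1 G c + bd1 G c' := by
  simp only [bd1_eq]; exact map_add _ _ _

lemma bd1_sub (c c' : (V × V) →₀ G) : bd1 G (c - c') = bd1 G c - bd1 G c' := by
  simp only [bd1_eq]; exact map_sub _ _ _

lemma bd2_add (w w' : (V × V × V) →₀ G) : bd2 G (w + w') = bd2 G w + bd2 G w' := by
  simp only [bd2_eq]; exact map_add _ _ _

lemma bd2_neg (w : (V × V × V) →₀ G) : bd2 G (-w) = - bd2 G w := by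
  simp only [bd2_eq]; exact map_neg _ _

lemma bd1_single (p : V × V) (g : G) :
    bd1 G (Finsupp.single p g) = Finsupp.single p.2 g - Finsupp.single p.1 g :=
  Finsupp.sum_single_index (by simp)

lemma bd2_single (a : V × V × V) (g : G) :
    bd2 G (Finsupp.single a g) =
      Finsupp.single (a.2.1, a.2.2) g - Finsupp.single (a.1, a.2.2) g +
        Finsupp.single (a.1, a.2.1) g :=
  Finsupp.sum_single_index (by simp)

lemma bd1_bd2 (w : (V × V × V) →₀ G) : bd1 G (bd2 G w) = 0 := by
  induction w using Finsupp.induction_linear with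
  | zero => simp
  | add f g hf hg => rw [bd2_add, bd1_add, hf, hg, add_zero]
  | single a g =>
      rw [bd2_single]
      have h1 : ∀ (p : V × V) (g : G), bd1 G (Finsupp.single p g) =
          Finsupp.single p.2 g - Finsupp.single p.1 g := bd1_single
      rw [sub_add, bd1_sub, bd1_sub, h1, h1, h1]
      abel
end Aux


section Chain
variable {X : Type*} [MetricSpace X] {G : Type*} [AddCommGroup G]

lemma ripsHomologous_refl (s : ℝ) (c : (X × X) →₀ G) : RipsHomologous G s c c :=
  ⟨0, by simp, by simp⟩

lemma ripsHomologous_trans {s : ℝ} {c c' c'' : (X × X) →₀ G}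
    (h1 : RipsHomologous G s c c') (h2 : RipsHomologous G s c' c'') :
    RipsHomologous G s c c'' := by
  classical
  obtain ⟨w1, hw1, he1⟩ := h1
  obtain ⟨w2, hw2, he2⟩ := h2
  refine ⟨w1 + w2, ?_, ?_⟩
  · intro p hp
    rcases Finset.mem_union.1 (Finsupp.support_add hp) with h | h
    exacts [hw1 p h, hw2 p h]
  · rw [bd2_add, ← he1, ← he2]; abel

lemma move_bd (x x' y' y : X) (g : G) :
    (Finsupp.single (x, x') g + Finsupp.single (x', y') g + Finsupp.single (y', y) g)
      - Finsupp.single (x, y) g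
      = bd2 G (Finsupp.single (x, x', y) g + Finsupp.single (x', y', y) g) := by
  rw [bd2_add, bd2_single, bd2_single]
  abel

end Chain


section Descent
variable {X : Type*} [MetricSpace X] {G : Type*} [AddCommGroup G]

/-- uniform descent step from compactness -/
lemma uniform_move [CompactSpace X] {t s s'' : ℝ} (ht : 0 < t) (hts : t ≤ s'')
    (hss : s'' < s) {δ : ℝ} (hδ : 0 < δ)
    (hnl : ∀ x y : X, t ≤ dist x y → dist x y < s → ¬ LocMinPair x y) :
    ∃ η > 0, ∀ p : X × X, t ≤ dist p.1 p.2 → dist p.1 p.2 ≤ s'' →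
      ∃ q : X × X, dist p.1 q.1 < δ ∧ dist p.2 q.2 < δ ∧
        dist q.1 q.2 < dist p.1 p.2 - η := by
  classical
  have hsel : ∀ p : X × X, ∃ q : X × X,
      t ≤ dist p.1 p.2 → dist p.1 p.2 ≤ s'' →
      dist p.1 q.1 < δ / 2 ∧ dist p.2 q.2 < δ / 2 ∧ dist q.1 q.2 < dist p.1 p.2 := by
    intro p
    by_cases h : t ≤ dist p.1 p.2 ∧ dist p.1 p.2 ≤ s''
    · have hnp := hnl p.1 p.2 h.1 (lt_of_le_of_lt h.2 hss)
      rw [LocMinPair] at hnp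
      push_neg at hnp
      obtain ⟨x', y', hx', hy', hlt⟩ := hnp (δ / 2) (by positivity)
      exact ⟨(x', y'), fun _ _ => ⟨hx', hy', hlt⟩⟩
    · exact ⟨p, fun h1 h2 => absurd ⟨h1, h2⟩ h⟩
  choose q hq using hsel
  set η₀ : X × X → ℝ := fun p => (dist p.1 p.2 - dist (q p).1 (q p).2) / 3 with hη₀
  set K : Set (X × X) := (fun p : X × X => dist p.1 p.2) ⁻¹' (Set.Icc t s'') with hKdef
  have hKc : IsCompact K := (isClosed_Icc.preimage continuous_dist).isCompact
  have hKpos : ∀ p ∈ K, 0 < η₀ p := by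
    intro p hp
    have := (hq p hp.1 hp.2).2.2
    simp only [hη₀]
    linarith
  obtain ⟨T, hTK, hTcov⟩ := hKc.elim_nhds_subcover
    (fun p => Metric.ball p (min (δ / 2) (η₀ p)))
    (fun p hp => Metric.ball_mem_nhds _ (lt_min (by positivity) (hKpos p hp)))
  by_cases hT : T.Nonempty
  · refine ⟨min (δ/2) (T.inf' hT η₀), lt_min (by positivity)
      ((Finset.lt_inf'_iff _).2 fun p hp => hKpos p (hTK p hp)), ?_⟩
    intro p h1 h2
    have hpK : p ∈ K := ⟨h1, h2⟩
    have := hTcov hpK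
    simp only [Set.mem_iUnion] at this
    obtain ⟨p₀, hp₀T, hball⟩ := this
    have hp₀K : p₀ ∈ K := hTK p₀ hp₀T
    have hq₀ := hq p₀ hp₀K.1 hp₀K.2
    have hd : dist p p₀ < min (δ / 2) (η₀ p₀) := Metric.mem_ball.1 hball
    have hd1 : dist p.1 p₀.1 ≤ dist p p₀ := by
      rw [Prod.dist_eq]; exact le_max_left _ _
    have hd2 : dist p.2 p₀.2 ≤ dist p p₀ := by
      rw [Prod.dist_eq]; exact le_max_right _ _
    have hmin1 : dist p p₀ < δ / 2 := lt_of_lt_of_le hd (min_le_left _ _)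
    have hmin2 : dist p p₀ < η₀ p₀ := lt_of_lt_of_le hd (min_le_right _ _)
    refine ⟨q p₀, ?_, ?_, ?_⟩
    · calc dist p.1 (q p₀).1 ≤ dist p.1 p₀.1 + dist p₀.1 (q p₀).1 := dist_triangle _ _ _
        _ < δ / 2 + δ / 2 := by
            have := hq₀.1; linarith
        _ = δ := by ring
    · calc dist p.2 (q p₀).2 ≤ dist p.2 p₀.2 + dist p₀.2 (q p₀).2 := dist_triangle _ _ _
        _ < δ / 2 + δ / 2 := by
            have := hq₀.2.1; linarith
        _ = δ := by ring
    · have hqd : dist (q p₀).1 (q p₀).2 = dist p₀.1 p₀.2 - 3 * η₀ p₀ := by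
        simp only [hη₀]; ring
      have htri : dist p₀.1 p₀.2 ≤ dist p.1 p.2 + dist p.1 p₀.1 + dist p.2 p₀.2 := by
        calc dist p₀.1 p₀.2 ≤ dist p₀.1 p.1 + dist p.1 p₀.2 := dist_triangle _ _ _
          _ ≤ dist p₀.1 p.1 + (dist p.1 p.2 + dist p.2 p₀.2) := by
              have := dist_triangle p.1 p.2 p₀.2; linarith
          _ = dist p.1 p.2 + dist p.1 p₀.1 + dist p.2 p₀.2 := by
              rw [dist_comm p₀.1 p.1]; ring
      have hinf : min (δ/2) (T.inf' hT η₀) ≤ η₀ p₀ :=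
        le_trans (min_le_right _ _) (Finset.inf'_le _ hp₀T)
      have := hKpos p₀ hp₀K
      linarith
  · rw [Finset.not_nonempty_iff_eq_empty] at hT
    refine ⟨1, one_pos, fun p h1 h2 => ?_⟩
    have := hTcov (⟨h1, h2⟩ : p ∈ K)
    simp [hT] at this

end Descent

section Move
variable {X : Type*} [MetricSpace X] {G : Type*} [AddCommGroup G]

lemma move_step {s : ℝ} (c : (X × X) →₀ G) (p : X × X)
    (x' y' : X)
    (h1 : dist p.1 x' < s) (h2 : dist p.1 p.2 < s) (h3 : dist x' p.2 < s)
    (h4 : dist x' y' < s) (h5 : dist y' p.2 < s)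
    (hne1 : (p.1, x') ≠ p) (hne2 : (x', y') ≠ p) (hne3 : (y', p.2) ≠ p) :
    ∃ c' : (X × X) →₀ G, RipsHomologous G s c c' ∧
      ∀ r ∈ c'.support,
        (r ≠ p ∧ r ∈ c.support) ∨ r = (p.1, x') ∨ r = (x', y') ∨ r = (y', p.2) := by
  classical
  set g := c p with hg
  set c' := c - Finsupp.single p g +
    (Finsupp.single (p.1, x') g + Finsupp.single (x', y') g +
      Finsupp.single (y', p.2) g) with hc'
  refine ⟨c', ⟨-(Finsupp.single (p.1, x', p.2) g + Finsupp.single (x', y', p.2) g),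
    ?_, ?_⟩, ?_⟩
  · intro u hu
    rw [Finsupp.support_neg] at hu
    rcases Finset.mem_union.1 (Finsupp.support_add hu) with h | h
    · have hu1 := Finset.mem_singleton.1 (Finsupp.support_single_subset h)
      subst hu1
      exact ⟨h1, h2, h3⟩
    · have hu2 := Finset.mem_singleton.1 (Finsupp.support_single_subset h)
      subst hu2
      exact ⟨h4, h3, h5⟩
  · rw [bd2_neg, ← move_bd p.1 x' y' p.2 g, hc']
    abel
  · intro r hr
    by_cases hrnew : r = (p.1, x') ∨ r = (x', y') ∨ r = (y', p.2)
    · tauto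
    · push_neg at hrnew
      obtain ⟨hr1, hr2, hr3⟩ := hrnew
      have hval : c' r = c r - (Finsupp.single p g) r := by
        rw [hc']
        simp [Finsupp.single_eq_of_ne' (Ne.symm hr1), Finsupp.single_eq_of_ne' (Ne.symm hr2),
          Finsupp.single_eq_of_ne' (Ne.symm hr3)]
      have hrc' : c' r ≠ 0 := Finsupp.mem_support_iff.1 hr
      have hrp : r ≠ p := by
        intro h
        subst h
        rw [hval, Finsupp.single_eq_same, ← hg, sub_self] at hrc'
        exact hrc' rfl
      rw [hval, Finsupp.single_eq_of_ne' (Ne.symm hrp), sub_zero] at hrc'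
      exact Or.inl ⟨hrp, Finsupp.mem_support_iff.2 hrc'⟩

end Move

section Shorten
variable {X : Type*} [MetricSpace X] {G : Type*} [AddCommGroup G]

lemma shorten [CompactSpace X] (t s : ℝ) (ht : 0 < t) (hts : t ≤ s)
    (hnl : ∀ x y : X, t ≤ dist x y → dist x y < s → ¬ LocMinPair x y)
    (α : (X × X) →₀ G) (hα : ∀ p ∈ α.support, dist p.1 p.2 < s) :
    ∃ α' : (X × X) →₀ G, (∀ p ∈ α'.support, dist p.1 p.2 < t) ∧
      RipsHomologous G s α α' := by
  classical
  by_cases hall : ∀ p ∈ α.support, dist p.1 p.2 < t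
  · exact ⟨α, hall, ripsHomologous_refl _ _⟩
  push_neg at hall
  obtain ⟨p₀, hp₀, hge₀⟩ := hall
  have hne : (α.support.image fun p => dist p.1 p.2).Nonempty :=
    ⟨_, Finset.mem_image_of_mem _ hp₀⟩
  set s'' := (α.support.image fun p => dist p.1 p.2).max' hne with hs''
  have hles : ∀ p ∈ α.support, dist p.1 p.2 ≤ s'' := by
    intro p hp
    rw [hs'']
    have hmem : dist p.1 p.2 ∈ α.support.image fun r => dist r.1 r.2 :=
      Finset.mem_image_of_mem _ hp
    exact Finset.le_max' _ _ hmem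
  have hs''lt : s'' < s := by
    obtain ⟨p₁, hp₁, hval⟩ :=
      Finset.mem_image.1 (Finset.max'_mem (α.support.image fun p => dist p.1 p.2) hne)
    rw [hs'', ← hval]
    exact hα p₁ hp₁
  have hts'' : t ≤ s'' := le_trans hge₀ (hles p₀ hp₀)
  set δ := min t (s - s'') / 2 with hδdef
  have hδpos : 0 < δ := by
    rw [hδdef]
    have : (0:ℝ) < min t (s - s'') := lt_min ht (by linarith)
    linarith
  have hδt : δ < t := by
    rw [hδdef]
    have : min t (s - s'') ≤ t := min_le_left _ _
    linarith
  have hδss : δ + s'' < s := by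
    rw [hδdef]
    have : min t (s - s'') ≤ s - s'' := min_le_right _ _
    linarith
  obtain ⟨η, hη, hmove⟩ := uniform_move ht hts'' hs''lt hδpos hnl
  have key : ∀ n : ℕ, ∀ c : (X × X) →₀ G,
      (∀ p ∈ c.support, dist p.1 p.2 ≤ s'') →
      (∀ p ∈ c.support, dist p.1 p.2 < t + n * η) →
      ∃ c' : (X × X) →₀ G, (∀ p ∈ c'.support, dist p.1 p.2 < t) ∧
        RipsHomologous G s c c' := by
    intro n
    induction n with
    | zero =>
        intro c h1 h2
        exact ⟨c, by simpa using h2, ripsHomologous_refl _ _⟩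
    | succ n ih =>
        suffices h : ∀ k : ℕ, ∀ c : (X × X) →₀ G,
            (∀ p ∈ c.support, dist p.1 p.2 ≤ s'') →
            (∀ p ∈ c.support, dist p.1 p.2 < t + (n + 1 : ℕ) * η) →
            (c.support.filter fun p => t + n * η ≤ dist p.1 p.2).card ≤ k →
            ∃ c' : (X × X) →₀ G, (∀ p ∈ c'.support, dist p.1 p.2 < t) ∧
              RipsHomologous G s c c' by
          intro c h1 h2
          exact h _ c h1 h2 le_rfl
        intro k
        induction k with
        | zero =>
            intro c h1 h2 hcard
            apply ih c h1
            intro p hp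
            by_contra hgt
            push_neg at hgt
            have hmem : p ∈ c.support.filter fun p => t + n * η ≤ dist p.1 p.2 :=
              Finset.mem_filter.2 ⟨hp, hgt⟩
            rw [Nat.le_zero, Finset.card_eq_zero] at hcard
            rw [hcard] at hmem
            exact absurd hmem (Finset.notMem_empty _)
        | succ k ihk =>
            intro c h1 h2 hcard
            by_cases hemp : ∀ p ∈ c.support, dist p.1 p.2 < t + n * η
            · exact ih c h1 hemp
            push_neg at hemp
            obtain ⟨p, hp, hge⟩ := hemp
            have hnn : (0:ℝ) ≤ n * η := by positivity
            have htp : t ≤ dist p.1 p.2 := by linarith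
            obtain ⟨q', hq1, hq2, hq3⟩ := hmove p htp (h1 p hp)
            have hds'' : dist p.1 p.2 ≤ s'' := h1 p hp
            have hd_p : dist p.1 p.2 < s := lt_of_le_of_lt hds'' hs''lt
            have hδs : δ < s := by linarith
            have h1'' : dist p.1 q'.1 < s := by linarith
            have h3' : dist q'.1 p.2 < s := by
              calc dist q'.1 p.2 ≤ dist q'.1 p.1 + dist p.1 p.2 := dist_triangle _ _ _
                _ < δ + s'' := by rw [dist_comm]; linarith
                _ < s := hδss
            have h4' : dist q'.1 q'.2 < s := by linarith
            have h5' : dist q'.2 p.2 < s := by rw [dist_comm]; linarith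
            have hne1 : (p.1, q'.1) ≠ p := by
              intro h
              have : dist p.1 q'.1 = dist p.1 p.2 := by
                conv_rhs => rw [← h]
              linarith
            have hne2 : (q'.1, q'.2) ≠ p := by
              intro h
              have : dist q'.1 q'.2 = dist p.1 p.2 := by
                conv_rhs => rw [← h]
              linarith
            have hne3 : (q'.2, p.2) ≠ p := by
              intro h
              have : dist q'.2 p.2 = dist p.1 p.2 := by
                conv_rhs => rw [← h]
              rw [dist_comm] at this
              linarith
            obtain ⟨c', hhom, hsupp⟩ :=
              move_step (s := s) c p q'.1 q'.2 h1'' hd_p h3' h4' h5' hne1 hne2 hne3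
            have hd2 : dist p.1 p.2 < t + (n + 1 : ℕ) * η := h2 p hp
            have hcast : ((n + 1 : ℕ) : ℝ) * η = n * η + η := by push_cast; ring
            have hnewlt : ∀ r ∈ c'.support, r ∉ c.support → dist r.1 r.2 < t + n * η := by
              intro r hr hrc
              rcases hsupp r hr with ⟨_, hmem⟩ | rfl | rfl | rfl
              · exact absurd hmem hrc
              · simpa using (by linarith : dist p.1 q'.1 < t + n * η)
              · simpa using (by linarith [hcast ▸ hd2] : dist q'.1 q'.2 < t + n * η)
              · have : dist q'.2 p.2 < t + n * η := by rw [dist_comm]; linarith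
                simpa using this
            have h1' : ∀ r ∈ c'.support, dist r.1 r.2 ≤ s'' := by
              intro r hr
              by_cases hrc : r ∈ c.support
              · exact h1 r hrc
              · have := hnewlt r hr hrc
                linarith
            have h2' : ∀ r ∈ c'.support, dist r.1 r.2 < t + (n + 1 : ℕ) * η := by
              intro r hr
              by_cases hrc : r ∈ c.support
              · exact h2 r hrc
              · have := hnewlt r hr hrc
                rw [hcast]
                linarith
            have hcard' :
                (c'.support.filter fun r => t + n * η ≤ dist r.1 r.2).card ≤ k := by
              have hsub : (c'.support.filter fun r => t + n * η ≤ dist r.1 r.2) ⊆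
                  (c.support.filter fun r => t + n * η ≤ dist r.1 r.2).erase p := by
                intro r hr
                obtain ⟨hrs, hrd⟩ := Finset.mem_filter.1 hr
                rcases hsupp r hrs with ⟨hrp, hmem⟩ | rfl | rfl | rfl
                · exact Finset.mem_erase.2 ⟨hrp, Finset.mem_filter.2 ⟨hmem, hrd⟩⟩
                · exact absurd hrd (by simp; linarith)
                · exact absurd hrd (by simp; linarith [hcast ▸ hd2])
                · refine absurd hrd (by simp; rw [dist_comm]; linarith)
              have hpmem : p ∈ c.support.filter fun r => t + n * η ≤ dist r.1 r.2 :=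
                Finset.mem_filter.2 ⟨hp, hge⟩
              have := Finset.card_le_card hsub
              rw [Finset.card_erase_of_mem hpmem] at this
              omega
            obtain ⟨c'', hc''1, hc''2⟩ := ihk c' h1' h2' hcard'
            exact ⟨c'', hc''1, ripsHomologous_trans hhom hc''2⟩
  obtain ⟨N, hN⟩ := exists_nat_gt ((s'' - t) / η)
  have hNs : s'' < t + N * η := by
    rw [div_lt_iff₀ hη] at hN
    linarith
  exact key N α hles fun p hp => lt_of_le_of_lt (hles p hp) hNs

end Shorten

/-- if `b > 0` is not in the closure of the set of local minimum values of
`d`, then on some interval around `b` all inclusion-induced maps on `H₁` of the open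
Rips filtration are surjective: every `1`-cycle at scale `s` is homologous at scale `s`
to a `1`-cycle at scale `t`, for `b - ε < t ≤ s < b + ε`.  Hence the emergent `H₁`
spectrum is contained in the closure of `LocMin(d)`. -/
theorem stmt_19 {X : Type*} [MetricSpace X] [CompactSpace X] (G : Type*)
    [AddCommGroup G] (b : ℝ) (hb : 0 < b)
    (hbn : b ∉ closure {m : ℝ | IsLocMinVal X m}) :
    ∃ ε > 0, ∀ t s : ℝ, b - ε < t → t ≤ s → s < b + ε →
      ∀ α : (X × X) →₀ G, IsRipsCycle s α →
        ∃ α' : (X × X) →₀ G, IsRipsCycle t α' ∧ RipsHomologous G s α α' := by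
  classical
  rw [Metric.mem_closure_iff] at hbn
  push_neg at hbn
  obtain ⟨ε₀, hε₀, hS⟩ := hbn
  refine ⟨min ε₀ b / 2, by positivity, ?_⟩
  intro t s hbt hts hsb α hα
  have hεle : min ε₀ b / 2 ≤ ε₀ / 2 := by
    have := min_le_left ε₀ b; linarith
  have hεb : min ε₀ b / 2 ≤ b / 2 := by
    have := min_le_right ε₀ b; linarith
  have ht0 : 0 < t := by linarith
  have hnl : ∀ x y : X, t ≤ dist x y → dist x y < s → ¬ LocMinPair x y := by
    intro x y h1 h2 hlm
    have hmem : dist x y ∈ {m : ℝ | IsLocMinVal X m} := ⟨x, y, rfl, hlm⟩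
    have hd := hS _ hmem
    rw [Real.dist_eq] at hd
    have habs : |b - dist x y| < ε₀ := abs_lt.2 ⟨by linarith, by linarith⟩
    linarith
  obtain ⟨α', h1, h2⟩ := shorten t s ht0 hts hnl α hα.1
  refine ⟨α', ⟨h1, ?_⟩, h2⟩
  obtain ⟨w, hw, he⟩ := h2
  have hz : bd1 G (α - α') = 0 := by rw [he]; exact bd1_bd2 w
  rw [bd1_sub, hα.2, zero_sub, neg_eq_zero] at hz
  exact hz
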